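/- Let m be a prime number, let r = m or r = −m, let f ∈ ℤ[X], and in ℤ[X] consider the generalized Rédei polynomials A_n^{(i)} (0 ≤ i ≤ m−1) with parameters z = f and α = (−f)^m + r. Then for every natural number n divisible by m and every 0 ≤ i ≤ m−1, the integer m^{n/m} divides A_n^{(i)} in ℤ[X] (i.e., it divides every coefficient). -/

import Mathlib

/-- The generalized Rédei polynomials `A_n^{(i)}(z, α)` for parameter `m`, defined by the
recursion `A_{n+1}^{(0)} = z·A_n^{(0)} + α·A_n^{(m−1)}`, `A_{n+1}^{(i)} = z·A_n^{(i)} + A_n^{(i−1)}`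
for `1 ≤ i ≤ m−1`, with `A_0^{(0)} = 1` and `A_0^{(i)} = 0` for `i ≠ 0`. -/
def genRedei {R : Type*} [CommRing R] (m : ℕ) (z α : R) : ℕ → ℕ → R
  | 0, i => if i = 0 then 1 else 0
  | n + 1, 0 => z * genRedei m z α n 0 + α * genRedei m z α n (m - 1)
  | n + 1, i + 1 => z * genRedei m z α n (i + 1) + genRedei m z α n i

/-- The `m×m` matrix with `z` on the diagonal, `1` on the subdiagonal, `α` in the top-right
corner and `0` elsewhere. -/
def pellMatrix (m : ℕ) {R : Type*} [CommRing R] (z α : R) : Matrix (Fin m) (Fin m) R :=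
  Matrix.of fun i j =>
    if (i : ℕ) = (j : ℕ) then z
    else if (i : ℕ) = (j : ℕ) + 1 then 1
    else if (i : ℕ) = 0 ∧ (j : ℕ) = m - 1 then α
    else 0

/-- The circulant-type matrix whose `(i,j)` entry is `A_n^{(i−j)}` when `i ≥ j` and
`α·A_n^{(m+i−j)}` when `i < j`; its first column is `(A_n^{(0)}, …, A_n^{(m−1)})ᵀ`. -/
def genRedeiMatrix (m : ℕ) {R : Type*} [CommRing R] (z α : R) (n : ℕ) :
    Matrix (Fin m) (Fin m) R :=
  Matrix.of fun i j =>
    if (j : ℕ) ≤ (i : ℕ) then genRedei m z α n ((i : ℕ) - (j : ℕ))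
    else α * genRedei m z α n (m + (i : ℕ) - (j : ℕ))

open Polynomial Finset in
private lemma genRedei_rep {R : Type*} [CommRing R] (M : ℕ) (z α : R) (n : ℕ) :
    (X ^ (M+1) - C α) ∣ (C z + X)^n
      - ∑ i ∈ Finset.range (M+1), C (genRedei (M+1) z α n i) * X ^ i := by
  induction n with
  | zero =>
    rw [Finset.sum_range_succ']
    simp [genRedei]
  | succ n ih =>
    set A := genRedei (M+1) z α with hA
    have hrec0 : A (n+1) 0 = z * A n 0 + α * A n M := by
      simp [hA, genRedei]
    have hrecS : ∀ i, A (n+1) (i+1) = z * A n (i+1) + A n i := fun i => by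
      simp [hA, genRedei]
    have key : (C z + X) * (∑ i ∈ Finset.range (M+1), C (A n i) * X ^ i)
        - ∑ i ∈ Finset.range (M+1), C (A (n+1) i) * X ^ i
        = C (A n M) * (X^(M+1) - C α) := by
      rw [add_mul, Finset.mul_sum, Finset.mul_sum,
        Finset.sum_range_succ' (fun i => C z * (C (A n i) * X ^ i)) M,
        Finset.sum_range_succ (fun i => X * (C (A n i) * X ^ i)) M,
        Finset.sum_range_succ' (fun i => C (A (n+1) i) * X ^ i) M]
      simp only [hrec0, hrecS, map_add, map_mul]
      have e1 : ∀ i ∈ Finset.range M, X * (C (A n i) * X ^ i)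
          = C (A n i) * X ^ (i+1) := by
        intro i _; ring
      have e2 : ∀ i ∈ Finset.range M, (C z * C (A n (i+1)) + C (A n i)) * X ^ (i+1)
          = C z * (C (A n (i+1)) * X ^ (i+1)) + C (A n i) * X ^ (i+1) := by
        intro i _; ring
      rw [Finset.sum_congr rfl e1, Finset.sum_congr rfl e2, Finset.sum_add_distrib]
      ring
    have step : (C z + X)^(n+1)
        - ∑ i ∈ Finset.range (M+1), C (A (n+1) i) * X ^ i
        = (C z + X) * ((C z + X)^n - ∑ i ∈ Finset.range (M+1), C (A n i) * X ^ i)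
          + C (A n M) * (X^(M+1) - C α) := by
      rw [← key]; ring
    rw [step]
    exact dvd_add (Dvd.dvd.mul_left ih _) (Dvd.dvd.mul_left dvd_rfl _)

open Polynomial in
/-- For a prime `m`, `r = ±m` and any `f ∈ ℤ[X]`, the integer `m^{n/m}` divides every
generalized Rédei polynomial `A_n^{(i)}` (with parameters `z = f`, `α = (−f)^m + r`) in `ℤ[X]`,
for every `n` divisible by `m` and every `0 ≤ i ≤ m − 1`. -/
theorem genRedei_divisibility (m : ℕ) (hm : m.Prime) (r : ℤ) (hr : r = m ∨ r = -(m : ℤ))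
    (f : Polynomial ℤ) (n : ℕ) (hn : m ∣ n) (i : ℕ) (hi : i ≤ m - 1) :
    C ((m : ℤ) ^ (n / m)) ∣ genRedei m f ((-f) ^ m + C r) n i := by
  obtain ⟨k, rfl⟩ := hn
  have hm1 : 1 ≤ m := hm.one_lt.le
  have hm0 : m ≠ 0 := hm.pos.ne'
  obtain ⟨M, hM⟩ : ∃ M, m = M + 1 := ⟨m - 1, by omega⟩
  set α : Polynomial ℤ := (-f) ^ m + C r with hα
  -- m divides α + f^m in ℤ[X]
  have hαz : (m : Polynomial ℤ) ∣ (α + f ^ m) := by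
    rcases eq_or_ne m 2 with h2 | hne
    · subst h2
      rcases hr with rfl | rfl
      · exact ⟨f ^ 2 + 1, by
          have h2 : C ((2:ℕ):ℤ) = (2:ℤ[X]) := by push_cast; norm_num
          rw [hα]; rw [h2]; push_cast; ring⟩
      · exact ⟨f ^ 2 - 1, by
          have h2 : C (-((2:ℕ):ℤ)) = (-2:ℤ[X]) := by push_cast; norm_num
          rw [hα]; rw [h2]; push_cast; ring⟩
    · have ho : Odd m := hm.odd_of_ne_two hne
      have : α + f ^ m = C r := by rw [hα, ho.neg_pow]; ring
      rw [this]
      rcases hr with rfl | rfl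
      · exact ⟨1, by rw [map_natCast (C : ℤ →+* Polynomial ℤ) m, mul_one]⟩
      · exact ⟨-1, by rw [map_neg, map_natCast (C : ℤ →+* Polynomial ℤ) m]; ring⟩
  set g : Polynomial (Polynomial ℤ) := X ^ m - C α with hg
  have hgmonic : g.Monic := monic_X_pow_sub_C α hm0
  have hdegg : g.degree = (m : ℕ) := degree_X_pow_sub_C hm.pos α
  -- (C f + X)^m = g + m * D
  obtain ⟨s, hs⟩ : ∃ s, (C f + X) ^ m = C f ^ m + X ^ m + (m : Polynomial (Polynomial ℤ)) * s := by
    obtain ⟨s, hs⟩ := exists_add_pow_prime_eq hm (C f) (X : Polynomial (Polynomial ℤ))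
    exact ⟨C f * X * s, by rw [hs]; ring⟩
  obtain ⟨c, hc⟩ := hαz
  have hD : (C f + X) ^ m = g + (m : Polynomial (Polynomial ℤ)) * (C c + s) := by
    rw [hs, hg]
    have : (C f : Polynomial (Polynomial ℤ)) ^ m + C α = (m : Polynomial (Polynomial ℤ)) * C c := by
      rw [← map_pow, ← map_add, ← map_natCast (C : Polynomial ℤ →+* Polynomial (Polynomial ℤ)) m,
        ← map_mul, ← hc]
      ring_nf
    linear_combination this
  set D : Polynomial (Polynomial ℤ) := C c + s with hDdef
  -- g ∣ (Cf+X)^(m k) - (m D)^k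
  have hpow : g ∣ (C f + X) ^ (m * k) - ((m : Polynomial (Polynomial ℤ)) * D) ^ k := by
    rw [pow_mul]
    have h1 : (C f + X) ^ m - (m : Polynomial (Polynomial ℤ)) * D = g := by
      rw [hD]; ring
    calc g = (C f + X) ^ m - (m : Polynomial (Polynomial ℤ)) * D := h1.symm
      _ ∣ _ := sub_dvd_pow_sub_pow _ _ k
  set A := genRedei m f α with hA
  set P : Polynomial (Polynomial ℤ) := ∑ j ∈ Finset.range m, C (A (m * k) j) * X ^ j with hP
  have hrep : g ∣ (C f + X) ^ (m * k) - P := by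
    rw [hP, hA, hg, hM]
    exact genRedei_rep M f α ((M + 1) * k)
  set E : Polynomial (Polynomial ℤ) := D ^ k %ₘ g with hE
  have hmodE : g ∣ D ^ k - E := by
    rw [hE, modByMonic_eq_sub_mul_div _ g]
    exact ⟨D ^ k /ₘ g, by ring⟩
  have hcast : ((m : Polynomial (Polynomial ℤ)) * D) ^ k
      = C ((m : Polynomial ℤ) ^ k) * D ^ k := by
    rw [mul_pow, map_pow, map_natCast (C : Polynomial ℤ →+* Polynomial (Polynomial ℤ)) m]
  have hfinal : g ∣ P - C ((m : Polynomial ℤ) ^ k) * E := by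
    have h1 : P - C ((m : Polynomial ℤ) ^ k) * E
        = -((C f + X) ^ (m * k) - P)
          + ((C f + X) ^ (m * k) - ((m : Polynomial (Polynomial ℤ)) * D) ^ k)
          + C ((m : Polynomial ℤ) ^ k) * (D ^ k - E) := by
      rw [hcast]; ring
    rw [h1]
    exact dvd_add (dvd_add (dvd_neg.mpr hrep) hpow) (Dvd.dvd.mul_left hmodE _)
  have hdegP : P.degree < (m : ℕ) := by
    rw [hP]
    apply lt_of_le_of_lt (degree_sum_le _ _)
    rw [Finset.sup_lt_iff (by exact_mod_cast WithBot.bot_lt_coe (m:ℕ))]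
    intro j hj
    calc (C (A (m*k) j) * X ^ j).degree ≤ ((j : ℕ) : WithBot ℕ) := degree_C_mul_X_pow_le _ _
      _ < ((m : ℕ) : WithBot ℕ) := by exact_mod_cast Finset.mem_range.mp hj
  have hdegE : (C ((m : Polynomial ℤ) ^ k) * E).degree < (m : ℕ) := by
    calc (C ((m : Polynomial ℤ) ^ k) * E).degree
        ≤ (C ((m : Polynomial ℤ) ^ k)).degree + E.degree := degree_mul_le _ _
      _ ≤ 0 + E.degree := add_le_add degree_C_le le_rfl
      _ = E.degree := zero_add _
      _ < g.degree := degree_modByMonic_lt _ hgmonic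
      _ = (m : ℕ) := hdegg
  have hzero : P - C ((m : Polynomial ℤ) ^ k) * E = 0 := by
    apply eq_zero_of_dvd_of_degree_lt hfinal
    rw [hdegg]
    exact lt_of_le_of_lt (degree_sub_le _ _) (max_lt hdegP hdegE)
  have hPE : P = C ((m : Polynomial ℤ) ^ k) * E := by
    have := sub_eq_zero.mp hzero; exact this
  have hilt : i < m := by omega
  have hcoeff : A (m * k) i = (m : Polynomial ℤ) ^ k * E.coeff i := by
    have h1 : P.coeff i = A (m * k) i := by
      simp [hP, finset_sum_coeff, coeff_C_mul, coeff_X_pow, Finset.sum_ite_eq,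
        Finset.mem_range, hilt]
    have h2 : (C ((m : Polynomial ℤ) ^ k) * E).coeff i
        = (m : Polynomial ℤ) ^ k * E.coeff i := coeff_C_mul _
    rw [← h1, hPE, h2]
  rw [Nat.mul_div_cancel_left k hm.pos]
  refine ⟨E.coeff i, ?_⟩
  rw [hcoeff]
  congr 1
  rw [map_pow, map_natCast (C : ℤ →+* Polynomial ℤ) m]
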